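/- Let X : Ω → ℝⁿ and ε : Ω → ℝᵐ be square-integrable random vectors on a probability space, with X and ε independent and E[ε] = 0. Let F ∈ ℝ^{m×n}, set Y = F X + ε, μ_X = E[X], S_X = Cov(X), and S_Y = Cov(Y), and suppose K_Y has full column rank with S_Y = K_Y K_Yᵀ. Let M be a best rank-≤r approximation of S_X Fᵀ (K_Y†)ᵀ in the Frobenius norm, set Â = M K_Y† and b̂ = (Iₙ − Â F) μ_X. Then rank(Â) ≤ r and for every A ∈ ℝ^{n×m} with rank(A) ≤ r and every b ∈ ℝⁿ, E‖Â Y + b̂ − X‖₂² ≤ E‖A Y + b − X‖₂². -/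

import Mathlib

open Matrix MeasureTheory

set_option linter.unusedSectionVars false
set_option maxHeartbeats 1000000

section Helpers
variable {Ω : Type} [MeasurableSpace Ω] {μ : Measure Ω} [IsProbabilityMeasure μ]

lemma memLp_apply' {k : ℕ} {U : Ω → Fin k → ℝ} (hU : MemLp U 2 μ) (i : Fin k) :
    MemLp (fun ω => U ω i) 2 μ :=
  (ContinuousLinearMap.proj (R := ℝ) (φ := fun _ : Fin k => ℝ) i).comp_memLp' hU

lemma integral_pi_apply' {k : ℕ} {U : Ω → Fin k → ℝ} (hU : Integrable U μ) (i : Fin k) :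
    (∫ ω, U ω ∂μ) i = ∫ ω, U ω i ∂μ := by
  have := (ContinuousLinearMap.proj (R := ℝ) (φ := fun _ : Fin k => ℝ) i).integral_comp_comm hU
  simp only [ContinuousLinearMap.proj_apply] at this
  exact this.symm

lemma my_int_mul {f g : Ω → ℝ} (hf : MemLp f 2 μ) (hg : MemLp g 2 μ) :
    Integrable (fun ω => f ω * g ω) μ := by
  have h : MemLp (g • f) 1 μ := hf.smul hg
  have : (g • f) = fun ω => g ω * f ω := rfl
  rw [this] at h
  simpa [mul_comm] using memLp_one_iff_integrable.mp h

lemma integral_sum_mul' {k : ℕ} (c : Fin k → ℝ) (f : Fin k → Ω → ℝ) (g : Ω → ℝ)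
    (hint : ∀ j, Integrable (fun ω => f j ω * g ω) μ) :
    ∫ ω, (∑ j, c j * f j ω) * g ω ∂μ = ∑ j, c j * ∫ ω, f j ω * g ω ∂μ := by
  have h : ∀ ω, (∑ j, c j * f j ω) * g ω = ∑ j, c j * (f j ω * g ω) := by
    intro ω; rw [Finset.sum_mul]; simp [mul_assoc]
  simp_rw [h]
  rw [integral_finset_sum _ (fun j _ => (hint j).const_mul _)]
  simp_rw [integral_const_mul]

lemma integral_sum_mul_sum' {k l : ℕ} (c : Fin k → ℝ) (e : Fin l → ℝ)
    (f : Fin k → Ω → ℝ) (g : Fin l → Ω → ℝ)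
    (hint : ∀ j t, Integrable (fun ω => f j ω * g t ω) μ) :
    ∫ ω, (∑ j, c j * f j ω) * (∑ t, e t * g t ω) ∂μ
      = ∑ j, ∑ t, c j * e t * ∫ ω, f j ω * g t ω ∂μ := by
  have h : ∀ ω, (∑ j, c j * f j ω) * (∑ t, e t * g t ω)
      = ∑ j, ∑ t, (c j * e t) * (f j ω * g t ω) := by
    intro ω; rw [Finset.sum_mul_sum]
    exact Finset.sum_congr rfl fun j _ => Finset.sum_congr rfl fun t _ => by ring
  simp_rw [h]
  rw [integral_finset_sum _ (fun j _ =>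
    integrable_finset_sum _ (fun t _ => (hint j t).const_mul _))]
  refine Finset.sum_congr rfl fun j _ => ?_
  rw [integral_finset_sum _ (fun t _ => (hint j t).const_mul _)]
  simp_rw [integral_const_mul]

lemma integral_sum_fun' {k : ℕ} (c : Fin k → ℝ) (f : Fin k → Ω → ℝ)
    (hint : ∀ j, Integrable (f j) μ) :
    ∫ ω, (∑ j, c j * f j ω) ∂μ = ∑ j, c j * ∫ ω, f j ω ∂μ := by
  rw [integral_finset_sum _ (fun j _ => (hint j).const_mul _)]
  simp_rw [integral_const_mul]

end Helpers
/-- Covariance matrix `E[(Z − E Z)(Z − E Z)ᵀ]` of a random vector. -/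
noncomputable def covMatrix {Ω : Type} [MeasurableSpace Ω] (μ : Measure Ω)
    {n : ℕ} (Z : Ω → Fin n → ℝ) : Matrix (Fin n) (Fin n) ℝ :=
  Matrix.of fun i j =>
    ∫ ω, (Z ω i - ∫ ω', Z ω' i ∂μ) * (Z ω j - ∫ ω', Z ω' j ∂μ) ∂μ

/-- Frobenius norm of a real matrix. -/
noncomputable def frob {m n : ℕ} (A : Matrix (Fin m) (Fin n) ℝ) : ℝ :=
  Real.sqrt (∑ i, ∑ j, (A i j) ^ 2)

/-- `Ad` is the Moore–Penrose pseudoinverse of `A` (the four Penrose conditions). -/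
def IsMoorePenrose {m n : ℕ} (A : Matrix (Fin m) (Fin n) ℝ)
    (Ad : Matrix (Fin n) (Fin m) ℝ) : Prop :=
  A * Ad * A = A ∧ Ad * A * Ad = Ad ∧ (A * Ad)ᵀ = A * Ad ∧ (Ad * A)ᵀ = Ad * A

/-- Affine linear inverse end-to-end problem: `Â = (S_X Fᵀ (K_Y†)ᵀ)_r K_Y†` together
with `b̂ = (Iₙ − Â F) μ_X` minimizes `E‖A Y + b − X‖₂²` over `rank(A) ≤ r` and `b`. -/
theorem affine_inverse_end_to_end_optimal {Ω : Type} [MeasurableSpace Ω]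
    (μ : Measure Ω) [IsProbabilityMeasure μ] {n m p r : ℕ}
    (X : Ω → Fin n → ℝ) (ε : Ω → Fin m → ℝ)
    (hX : MemLp X 2 μ) (hε : MemLp ε 2 μ)
    (hindep : ProbabilityTheory.IndepFun X ε μ)
    (hmean : (∫ ω, ε ω ∂μ) = 0)
    (F : Matrix (Fin m) (Fin n) ℝ)
    (KY : Matrix (Fin m) (Fin p) ℝ) (hKYrank : KY.rank = p)
    (hKY : covMatrix μ (fun ω => F *ᵥ X ω + ε ω) = KY * KYᵀ)
    (KYd : Matrix (Fin p) (Fin m) ℝ) (hKYd : IsMoorePenrose KY KYd)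
    (M : Matrix (Fin n) (Fin p) ℝ)
    (hMrank : M.rank ≤ r)
    (hMbest : ∀ N : Matrix (Fin n) (Fin p) ℝ, N.rank ≤ r →
      frob (covMatrix μ X * Fᵀ * KYdᵀ - M) ≤ frob (covMatrix μ X * Fᵀ * KYdᵀ - N)) :
    (M * KYd).rank ≤ r ∧
      ∀ A : Matrix (Fin n) (Fin m) ℝ, A.rank ≤ r → ∀ b : Fin n → ℝ,
        ∫ ω, ∑ i, ((M * KYd) *ᵥ (F *ᵥ X ω + ε ω)
              + ((1 : Matrix (Fin n) (Fin n) ℝ) - M * KYd * F) *ᵥ (∫ ω', X ω' ∂μ)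
              - X ω) i ^ 2 ∂μ
          ≤ ∫ ω, ∑ i, (A *ᵥ (F *ᵥ X ω + ε ω) + b - X ω) i ^ 2 ∂μ := by
  obtain ⟨hP1, hP2, hP3, hP4⟩ := hKYd
  refine ⟨le_trans (Matrix.rank_mul_le_left M KYd) hMrank, ?_⟩
  -- notation
  set Y : Ω → Fin m → ℝ := fun ω => F *ᵥ X ω + ε ω with hYdef
  set mX : Fin n → ℝ := ∫ ω', X ω' ∂μ with hmXdef
  set G : Matrix (Fin n) (Fin p) ℝ := covMatrix μ X * Fᵀ * KYdᵀ with hGdef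
  -- integrability basics
  have hXint : Integrable X μ := hX.integrable one_le_two
  have hεint : Integrable ε μ := hε.integrable one_le_two
  have hXi : ∀ i, MemLp (fun ω => X ω i) 2 μ := memLp_apply' hX
  have hεi : ∀ j, MemLp (fun ω => ε ω j) 2 μ := memLp_apply' hε
  have hY2 : MemLp Y 2 μ := by
    have h1 : MemLp (fun ω => F *ᵥ X ω) 2 μ := by
      have := (LinearMap.toContinuousLinearMap (Matrix.mulVecLin F)).comp_memLp' hX
      exact this
    exact h1.add hε
  have hYi : ∀ j, MemLp (fun ω => Y ω j) 2 μ := memLp_apply' hY2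
  -- means
  have hmXi : ∀ i, mX i = ∫ ω, X ω i ∂μ := fun i => integral_pi_apply' hXint i
  have hεm : ∀ j, ∫ ω, ε ω j ∂μ = 0 := by
    intro j; rw [← integral_pi_apply' hεint j, hmean]; rfl
  have hYapp : ∀ ω j, Y ω j = (∑ k, F j k * X ω k) + ε ω j := by
    intro ω j; simp [hYdef, Matrix.mulVec, dotProduct]
  have hmY : ∀ j, (∫ ω, Y ω j ∂μ) = ∑ k, F j k * mX k := by
    intro j
    simp_rw [hYapp]
    rw [integral_add (integrable_finset_sum _
        (fun k _ => (((hXi k).integrable one_le_two).const_mul _))) ((hεi j).integrable one_le_two),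
      hεm j, add_zero, integral_finset_sum _
        (fun k _ => (((hXi k).integrable one_le_two).const_mul _))]
    simp_rw [integral_const_mul, hmXi]
  -- centered processes
  set Xc : Fin n → Ω → ℝ := fun i ω => X ω i - mX i with hXcdef
  set Yc : Fin m → Ω → ℝ := fun j ω => Y ω j - ∑ k, F j k * mX k with hYcdef
  have hXc2 : ∀ i, MemLp (Xc i) 2 μ := fun i => (hXi i).sub (memLp_const _)
  have hYc2 : ∀ j, MemLp (Yc j) 2 μ := fun j => (hYi j).sub (memLp_const _)
  have hXc0 : ∀ i, ∫ ω, Xc i ω ∂μ = 0 := by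
    intro i
    rw [integral_sub ((hXi i).integrable one_le_two) (integrable_const _), integral_const]
    simp [hmXi]
  have hYc0 : ∀ j, ∫ ω, Yc j ω ∂μ = 0 := by
    intro j
    rw [integral_sub ((hYi j).integrable one_le_two) (integrable_const _), integral_const]
    simp [hmY]
  have hYcapp : ∀ j ω, Yc j ω = (∑ k, F j k * Xc k ω) + ε ω j := by
    intro j ω
    simp only [hYcdef, hYapp, hXcdef]
    simp_rw [mul_sub, Finset.sum_sub_distrib]
    ring
  -- covariance entries
  have hcovX : ∀ i i', covMatrix μ X i i' = ∫ ω, Xc i ω * Xc i' ω ∂μ := by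
    intro i i'; simp only [covMatrix, Matrix.of_apply, hXcdef, hmXi]
  have hcovY : ∀ j k, (KY * KYᵀ) j k = ∫ ω, Yc j ω * Yc k ω ∂μ := by
    intro j k
    rw [← hKY]
    simp only [covMatrix, Matrix.of_apply, hYcdef]
    simp_rw [hmY]
  -- product integrability
  have pYY : ∀ j k, Integrable (fun ω => Yc j ω * Yc k ω) μ :=
    fun j k => my_int_mul (hYc2 j) (hYc2 k)
  have pYX : ∀ j i, Integrable (fun ω => Yc j ω * Xc i ω) μ :=
    fun j i => my_int_mul (hYc2 j) (hXc2 i)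
  have pXX : ∀ i i', Integrable (fun ω => Xc i ω * Xc i' ω) μ :=
    fun i i' => my_int_mul (hXc2 i) (hXc2 i')
  -- cross covariance
  set CYX : Matrix (Fin m) (Fin n) ℝ := Matrix.of fun j i => ∫ ω, Yc j ω * Xc i ω ∂μ with hCYXdef
  have hεX : ∀ j i, ∫ ω, ε ω j * Xc i ω ∂μ = 0 := by
    intro j i
    have hI : ProbabilityTheory.IndepFun (fun ω => ε ω j) (fun ω => X ω i) μ :=
      hindep.symm.comp (measurable_pi_apply j) (measurable_pi_apply i)
    have h1 : ∫ ω, ε ω j * X ω i ∂μ = 0 := by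
      have := hI.integral_mul_eq_mul_integral ((hεi j).integrable one_le_two).aestronglyMeasurable
        ((hXi i).integrable one_le_two).aestronglyMeasurable
      simpa [hεm j] using this
    have h2 : (fun ω => ε ω j * Xc i ω)
        = fun ω => ε ω j * X ω i - mX i * ε ω j := by
      funext ω; simp only [hXcdef]; ring
    rw [h2, integral_sub (by have := my_int_mul (hεi j) (hXi i); exact this)
      (((hεi j).integrable one_le_two).const_mul _), h1, integral_const_mul, hεm j]
    ring
  have hCYXF : CYX = F * covMatrix μ X := by
    ext j i
    simp only [hCYXdef, Matrix.of_apply, Matrix.mul_apply]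
    simp_rw [hYcapp]
    have hsplit : ∀ ω, ((∑ k, F j k * Xc k ω) + ε ω j) * Xc i ω
        = (∑ k, F j k * Xc k ω) * Xc i ω + ε ω j * Xc i ω := fun ω => by ring
    simp_rw [hsplit]
    rw [integral_add (by
        have h2 : ∀ ω, (∑ k, F j k * Xc k ω) * Xc i ω = ∑ k, F j k * (Xc k ω * Xc i ω) := by
          intro ω; rw [Finset.sum_mul]; simp [mul_assoc]
        simp_rw [h2]
        exact integrable_finset_sum _ (fun k _ => (pXX k i).const_mul _))
      (by
        have := my_int_mul (hεi j) (hXc2 i); exact this),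
      hεX j i, add_zero, integral_sum_mul' _ _ _ (fun k => pXX k i)]
    exact Finset.sum_congr rfl fun k _ => by rw [hcovX]
  -- degeneracy : (1 - KY * KYd) * CYX = 0
  have hBKY : ((1 : Matrix (Fin m) (Fin m) ℝ) - KY * KYd) * KY = 0 := by
    rw [Matrix.sub_mul, Matrix.one_mul, Matrix.mul_assoc, ← Matrix.mul_assoc, hP1, sub_self]
  have hdeg : ((1 : Matrix (Fin m) (Fin m) ℝ) - KY * KYd) * CYX = 0 := by
    set B : Matrix (Fin m) (Fin m) ℝ := 1 - KY * KYd with hBdef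
    have hBCB : B * (KY * KYᵀ) * Bᵀ = 0 := by
      rw [← Matrix.mul_assoc, hBKY, Matrix.zero_mul, Matrix.zero_mul]
    have hS0 : ∀ j, (fun ω => ∑ k, B j k * Yc k ω) =ᵐ[μ] 0 := by
      intro j
      have hsq : ∫ ω, (∑ k, B j k * Yc k ω) * (∑ l, B j l * Yc l ω) ∂μ = 0 := by
        rw [integral_sum_mul_sum' _ _ _ _ (fun k l => pYY k l)]
        have : ∀ k l, B j k * B j l * ∫ ω, Yc k ω * Yc l ω ∂μ
            = B j k * (KY * KYᵀ) k l * B j l := by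
          intro k l; rw [← hcovY]; ring
        simp_rw [this]
        have := congrFun (congrFun hBCB j) j
        simp only [Matrix.mul_apply, Matrix.transpose_apply, Matrix.zero_apply] at this
        rw [← this]
        rw [Finset.sum_comm]
        exact Finset.sum_congr rfl fun k _ => by
          rw [Finset.sum_mul]
          exact Finset.sum_congr rfl fun l _ => by
            simp only [Matrix.mul_apply, Matrix.transpose_apply]; try ring
      have hnn : 0 ≤ fun ω => (∑ k, B j k * Yc k ω) * (∑ l, B j l * Yc l ω) := by
        intro ω; exact mul_self_nonneg _
      have hint : Integrable (fun ω => (∑ k, B j k * Yc k ω) * (∑ l, B j l * Yc l ω)) μ :=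
        my_int_mul (memLp_finset_sum _ (fun k _ => (hYc2 k).const_mul _))
          (memLp_finset_sum _ (fun k _ => (hYc2 k).const_mul _))
      have := (integral_eq_zero_iff_of_nonneg hnn hint).mp hsq
      filter_upwards [this] with ω hω
      have : (∑ k, B j k * Yc k ω) * (∑ k, B j k * Yc k ω) = 0 := hω
      simpa [mul_self_eq_zero] using this
    ext j i
    rw [Matrix.mul_apply, Matrix.zero_apply]
    have : ∑ k, B j k * CYX k i = ∫ ω, (∑ k, B j k * Yc k ω) * Xc i ω ∂μ := by
      rw [integral_sum_mul' _ _ _ (fun k => pYX k i)]; rfl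
    rw [this]
    rw [integral_congr_ae (by
      filter_upwards [hS0 j] with ω hω
      rw [hω]; simp : (fun ω => (∑ k, B j k * Yc k ω) * Xc i ω) =ᵐ[μ] 0)]
    simp
  -- symmetric covariance
  have hCXsym : (covMatrix μ X)ᵀ = covMatrix μ X := by
    ext i i'
    rw [Matrix.transpose_apply, hcovX, hcovX]
    simp_rw [mul_comm]
  -- pseudoinverse: KYd * KY = 1
  have hKdK : KYd * KY = 1 := by
    have hidem : (KYd * KY) * (KYd * KY) = KYd * KY := by
      rw [Matrix.mul_assoc KYd KY (KYd * KY), ← Matrix.mul_assoc KY KYd KY, hP1]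
    have hrank : (KYd * KY).rank = p := by
      refine le_antisymm ((Matrix.rank_le_card_width _).trans (by simp)) ?_
      have h1 : KY * (KYd * KY) = KY := by rw [← Matrix.mul_assoc, hP1]
      calc p = KY.rank := hKYrank.symm
        _ = (KY * (KYd * KY)).rank := by rw [h1]
        _ ≤ (KYd * KY).rank := Matrix.rank_mul_le_right _ _
    have hsurj : Function.Surjective (KYd * KY).mulVecLin := by
      rw [← LinearMap.range_eq_top]
      apply Submodule.eq_top_of_finrank_eq
      exact hrank.trans (Module.finrank_fin_fun (R := ℝ)).symm
    have hNv : ∀ v, (KYd * KY) *ᵥ v = v := by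
      intro v
      obtain ⟨u, hu⟩ := hsurj v
      have hu' : (KYd * KY) *ᵥ u = v := hu
      rw [← hu', Matrix.mulVec_mulVec, hidem]
    ext i j
    have h2 := congrFun (hNv (Pi.single j 1)) i
    rw [Matrix.mulVec_single_one] at h2
    simp only [Matrix.col_apply] at h2
    rw [h2]
    simp [Matrix.one_apply, Pi.single_apply, eq_comm]
  -- CYX = KY * Gᵀ
  have hCYXG : CYX = KY * Gᵀ := by
    have hGT : Gᵀ = KYd * (F * covMatrix μ X) := by
      rw [hGdef, Matrix.transpose_mul, Matrix.transpose_mul, Matrix.transpose_transpose,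
        Matrix.transpose_transpose, hCXsym]
    have hfix : KY * KYd * CYX = CYX := by
      have := hdeg
      rw [Matrix.sub_mul, Matrix.one_mul, sub_eq_zero] at this
      exact this.symm
    rw [hGT, ← hCYXF, ← Matrix.mul_assoc, hfix]
  -- the key expansion
  have key : ∀ (A : Matrix (Fin n) (Fin m) ℝ) (b : Fin n → ℝ),
      ∫ ω, ∑ i, (A *ᵥ (F *ᵥ X ω + ε ω) + b - X ω) i ^ 2 ∂μ
        = (∑ i, ∑ t, ((A * KY - G) i t) ^ 2)
          + ((∑ i, covMatrix μ X i i) - ∑ i, ∑ t, (G i t) ^ 2)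
          + ∑ i, ((A *ᵥ (F *ᵥ mX) + b - mX) i) ^ 2 := by
    intro A b
    set d : Fin n → ℝ := A *ᵥ (F *ᵥ mX) + b - mX with hddef
    have hFmX : ∀ j, (F *ᵥ mX) j = ∑ k, F j k * mX k := by
      intro j; simp [Matrix.mulVec, dotProduct]
    have hpoint : ∀ ω i, (A *ᵥ (F *ᵥ X ω + ε ω) + b - X ω) i
        = ((∑ j, A i j * Yc j ω) - Xc i ω) + d i := by
      intro ω i
      have hY' : ∀ j, (F *ᵥ X ω + ε ω) j = Y ω j := fun _ => rfl
      simp only [Pi.add_apply, Pi.sub_apply, Matrix.mulVec, dotProduct, hddef,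
        hYcdef, hXcdef, hY']
      simp_rw [mul_sub, Finset.sum_sub_distrib]
      ring
    have hS2 : ∀ i, MemLp (fun ω => ∑ j, A i j * Yc j ω) 2 μ :=
      fun i => memLp_finset_sum _ (fun j _ => (hYc2 j).const_mul _)
    have hV2 : ∀ i, MemLp (fun ω => (∑ j, A i j * Yc j ω) - Xc i ω) 2 μ := by
      intro i
      exact ((hS2 i).sub (hXc2 i) : MemLp (_ - _) 2 μ)
    have hV0 : ∀ i, ∫ ω, ((∑ j, A i j * Yc j ω) - Xc i ω) ∂μ = 0 := by
      intro i
      rw [integral_sub (integrable_finset_sum _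
          (fun j _ => ((hYc2 j).integrable one_le_two).const_mul _))
        ((hXc2 i).integrable one_le_two),
        integral_sum_fun' _ _ (fun j => (hYc2 j).integrable one_le_two), hXc0]
      simp [hYc0]
    have hIi : ∀ i, ∫ ω, (((∑ j, A i j * Yc j ω) - Xc i ω) + d i) ^ 2 ∂μ
        = ((∑ j, ∑ k, A i j * A i k * (KY * KYᵀ) j k)
            - 2 * ∑ j, A i j * CYX j i + covMatrix μ X i i) + d i ^ 2 := by
      intro i
      have hexp : ∀ ω, (((∑ j, A i j * Yc j ω) - Xc i ω) + d i) ^ 2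
          = ((∑ j, A i j * Yc j ω) - Xc i ω) * ((∑ j, A i j * Yc j ω) - Xc i ω)
            + (2 * d i) * ((∑ j, A i j * Yc j ω) - Xc i ω) + d i ^ 2 := by
        intro ω; ring
      simp_rw [hexp]
      have iVV : Integrable (fun ω => ((∑ j, A i j * Yc j ω) - Xc i ω)
          * ((∑ j, A i j * Yc j ω) - Xc i ω)) μ := my_int_mul (hV2 i) (hV2 i)
      have iV : Integrable (fun ω => (∑ j, A i j * Yc j ω) - Xc i ω) μ :=
        (hV2 i).integrable one_le_two
      have iA : Integrable (fun ω => ((∑ j, A i j * Yc j ω) - Xc i ω)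
          * ((∑ j, A i j * Yc j ω) - Xc i ω)
          + (2 * d i) * ((∑ j, A i j * Yc j ω) - Xc i ω)) μ :=
        iVV.add (iV.const_mul _)
      rw [integral_add iA (integrable_const _),
        integral_add iVV (iV.const_mul _), integral_const_mul, hV0, integral_const]
      have hVV : ∫ ω, ((∑ j, A i j * Yc j ω) - Xc i ω)
          * ((∑ j, A i j * Yc j ω) - Xc i ω) ∂μ
          = (∑ j, ∑ k, A i j * A i k * (KY * KYᵀ) j k)
            - 2 * ∑ j, A i j * CYX j i + covMatrix μ X i i := by
        have hexp2 : ∀ ω, ((∑ j, A i j * Yc j ω) - Xc i ω)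
            * ((∑ j, A i j * Yc j ω) - Xc i ω)
            = (∑ j, A i j * Yc j ω) * (∑ j, A i j * Yc j ω)
              - 2 * ((∑ j, A i j * Yc j ω) * Xc i ω) + Xc i ω * Xc i ω := by
          intro ω; ring
        simp_rw [hexp2]
        have iSS : Integrable (fun ω => (∑ j, A i j * Yc j ω) * (∑ j, A i j * Yc j ω)) μ :=
          my_int_mul (hS2 i) (hS2 i)
        have iSx : Integrable (fun ω => (∑ j, A i j * Yc j ω) * Xc i ω) μ :=
          my_int_mul (hS2 i) (hXc2 i)
        have iB : Integrable (fun ω => (∑ j, A i j * Yc j ω) * (∑ j, A i j * Yc j ω)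
            - 2 * ((∑ j, A i j * Yc j ω) * Xc i ω)) μ := iSS.sub (iSx.const_mul _)
        rw [integral_add iB (pXX i i),
          integral_sub iSS (iSx.const_mul _), integral_const_mul,
          integral_sum_mul_sum' _ _ _ _ pYY, integral_sum_mul' _ _ _ (fun j => pYX j i)]
        simp_rw [hcovY, hcovX, hCYXdef, Matrix.of_apply]
      rw [hVV]
      simp [measure_univ]
    -- algebraic rearrangement
    have alg1 : ∀ i, ∑ j, ∑ k, A i j * A i k * (KY * KYᵀ) j k
        = ∑ t, ((A * KY) i t) ^ 2 := by
      intro i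
      simp_rw [Matrix.mul_apply, Matrix.transpose_apply, Finset.mul_sum, pow_two,
        Finset.sum_mul_sum]
      rw [show (∑ j, ∑ k, ∑ t, A i j * A i k * (KY j t * KY k t))
          = ∑ t, ∑ j, ∑ k, A i j * A i k * (KY j t * KY k t) from
        (Finset.sum_congr rfl fun j _ => Finset.sum_comm).trans Finset.sum_comm]
      exact Finset.sum_congr rfl fun t _ => Finset.sum_congr rfl fun j _ =>
        Finset.sum_congr rfl fun k _ => by ring
    have alg2 : ∀ i, ∑ j, A i j * CYX j i = ∑ t, (A * KY) i t * G i t := by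
      intro i
      simp_rw [hCYXG, Matrix.mul_apply, Matrix.transpose_apply, Finset.mul_sum]
      rw [Finset.sum_comm]
      exact Finset.sum_congr rfl fun t _ => by
        rw [Finset.sum_mul]
        exact Finset.sum_congr rfl fun j _ => by ring
    simp_rw [hpoint]
    rw [integral_finset_sum _ (fun i _ => by
      have h2 : MemLp (fun ω => ((∑ j, A i j * Yc j ω) - Xc i ω) + d i) 2 μ :=
        (hV2 i).add (memLp_const _)
      have := my_int_mul h2 h2
      simpa [pow_two] using this)]
    simp_rw [hIi, alg1, alg2]
    have alg3 : ∀ i, (∑ t, ((A * KY) i t) ^ 2 - 2 * ∑ t, (A * KY) i t * G i t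
          + covMatrix μ X i i) + d i ^ 2
        = (∑ t, ((A * KY - G) i t) ^ 2) + (covMatrix μ X i i - ∑ t, (G i t) ^ 2)
          + d i ^ 2 := by
      intro i
      have h4 : ∑ t, ((A * KY - G) i t) ^ 2
          = ∑ t, (((A * KY) i t) ^ 2 - 2 * ((A * KY) i t * G i t) + (G i t) ^ 2) :=
        Finset.sum_congr rfl fun t _ => by rw [Matrix.sub_apply]; ring
      rw [h4, Finset.sum_add_distrib, Finset.sum_sub_distrib, ← Finset.mul_sum]
      ring
    simp_rw [alg3]
    rw [Finset.sum_add_distrib, Finset.sum_add_distrib, Finset.sum_sub_distrib]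
    try ring
  -- conclusion
  intro A hA b
  rw [key A b, key (M * KYd) (((1 : Matrix (Fin n) (Fin n) ℝ) - M * KYd * F) *ᵥ mX)]
  have hAhatK : M * KYd * KY = M := by rw [Matrix.mul_assoc, hKdK, Matrix.mul_one]
  have hdhat : (M * KYd) *ᵥ (F *ᵥ mX)
      + ((1 : Matrix (Fin n) (Fin n) ℝ) - M * KYd * F) *ᵥ mX - mX = 0 := by
    rw [Matrix.sub_mulVec, Matrix.one_mulVec, Matrix.mulVec_mulVec]
    abel
  rw [hdhat, hAhatK]
  simp only [Pi.zero_apply, ne_eq, OfNat.ofNat_ne_zero, not_false_eq_true, zero_pow,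
    Finset.sum_const_zero, add_zero]
  have hs1 : (0:ℝ) ≤ ∑ i, ∑ t, ((G - M) i t) ^ 2 :=
    Finset.sum_nonneg fun i _ => Finset.sum_nonneg fun t _ => sq_nonneg _
  have hs2 : (0:ℝ) ≤ ∑ i, ∑ t, ((G - A * KY) i t) ^ 2 :=
    Finset.sum_nonneg fun i _ => Finset.sum_nonneg fun t _ => sq_nonneg _
  have hfro : ∑ i, ∑ t, ((M - G) i t) ^ 2 ≤ ∑ i, ∑ t, ((A * KY - G) i t) ^ 2 := by
    have hr : (A * KY).rank ≤ r := le_trans (Matrix.rank_mul_le_left A KY) hA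
    have h := hMbest (A * KY) hr
    unfold frob at h
    have h2 := pow_le_pow_left₀ (Real.sqrt_nonneg _) h 2
    rw [Real.sq_sqrt hs1, Real.sq_sqrt hs2] at h2
    calc ∑ i, ∑ t, ((M - G) i t) ^ 2 = ∑ i, ∑ t, ((G - M) i t) ^ 2 :=
          Finset.sum_congr rfl fun i _ => Finset.sum_congr rfl fun t _ => by
            simp only [Matrix.sub_apply]; ring
      _ ≤ ∑ i, ∑ t, ((G - A * KY) i t) ^ 2 := h2
      _ = ∑ i, ∑ t, ((A * KY - G) i t) ^ 2 :=
          Finset.sum_congr rfl fun i _ => Finset.sum_congr rfl fun t _ => by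
            simp only [Matrix.sub_apply]; ring
  have hd2 : (0:ℝ) ≤ ∑ i, ((A *ᵥ (F *ᵥ mX) + b - mX) i) ^ 2 :=
    Finset.sum_nonneg fun i _ => sq_nonneg _
  linarith
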